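/- arXiv:1306.2007 — 2 statements merged into one kernel-verified Lean document; each statement's English description precedes it below -/
import Mathlib

section
/- Let Λ be a free ℤ-module of finite rank, λ a primitive element of Λ, and μ ∈ Λ with λ, μ linearly independent. Then the integral content of the class [μ] in Λ/ℤλ equals the integral content of λ ∧ μ in Λ ∧ Λ. -/
/-- An element of a `ℤ`-module is primitive if it is not a non-unit integer
multiple of another element. -/
def IsPrimitiveElt {M : Type*} [AddCommGroup M] [Module ℤ M] (x : M) : Prop :=
  ∀ (n : ℤ) (y : M), x = n • y → IsUnit n

/-- `r` is the integral content of `x`: the largest positive integer dividing `x`. -/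
def IsIntegralContent {M : Type*} [AddCommGroup M] [Module ℤ M] (r : ℤ) (x : M) : Prop :=
  0 < r ∧ (∃ y : M, x = r • y) ∧ ∀ s : ℤ, 0 < s → (∃ y : M, x = s • y) → s ≤ r

def IsPrimitiveElt' {M : Type*} [AddCommGroup M] (x : M) : Prop :=
  ∀ (n : ℤ) (y : M), x = n • y → IsUnit n

theorem quot_tf {Λ : Type*} [AddCommGroup Λ] [NoZeroSMulDivisors ℤ Λ]
    (l : Λ) (hl : IsPrimitiveElt' l) (n : ℤ) (hn : n ≠ 0) (y : Λ)
    (h : ∃ a : ℤ, n • y = a • l) : ∃ b : ℤ, y = b • l := by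
  obtain ⟨a, ha⟩ := h
  set d : ℤ := (Int.gcd n a : ℤ) with hd
  have hd0 : d ≠ 0 := by
    simp only [hd, ne_eq, Int.natCast_eq_zero, Int.gcd_eq_zero_iff, not_and_or]
    exact Or.inl hn
  have hdn : d ∣ n := Int.gcd_dvd_left n a
  have hda : d ∣ a := Int.gcd_dvd_right n a
  set n' : ℤ := n / d with hn'
  set a' : ℤ := a / d with ha'
  have hnd : n = d * n' := (Int.mul_ediv_cancel' hdn).symm
  have had : a = d * a' := (Int.mul_ediv_cancel' hda).symm
  have hg : Int.gcd n' a' = 1 := by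
    apply Int.gcd_div_gcd_div_gcd
    have : Int.gcd n a ≠ 0 := by exact_mod_cast hd ▸ hd0
    omega
  have key : n' • y = a' • l := by
    have h2 : d • (n' • y) = d • (a' • l) := by
      rw [hnd, had] at ha
      linear_combination (norm := module) ha
    exact smul_right_injective Λ hd0 h2
  have bez : n' * Int.gcdA n' a' + a' * Int.gcdB n' a' = 1 := by
    have h3 := Int.gcd_eq_gcd_ab n' a'
    rw [hg] at h3; exact_mod_cast h3.symm
  have hlu : l = n' • (Int.gcdA n' a' • l + Int.gcdB n' a' • y) := by
    linear_combination (norm := module) (-(Int.gcdB n' a')) • key - bez • l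
  have hu : IsUnit n' := hl _ _ hlu
  refine ⟨n' * a', ?_⟩
  have hsq : n' * n' = 1 := by
    rcases Int.isUnit_iff.mp hu with h | h <;> rw [h] <;> ring
  linear_combination (norm := module) n' • key - hsq • y

theorem exists_dual {Λ : Type*} [AddCommGroup Λ] [Module.Free ℤ Λ] [Module.Finite ℤ Λ]
    (l : Λ) (hl : IsPrimitiveElt' l) :
    ∃ φ : Λ →ₗ[ℤ] ℤ, φ l = 1 := by
  have hl0 : l ≠ 0 := by
    intro h
    have : IsUnit (0 : ℤ) := hl 0 0 (by rw [h, zero_smul])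
    simp at this
  set Q := Λ ⧸ Submodule.span ℤ {l} with hQ
  haveI : NoZeroSMulDivisors ℤ Q := by
    constructor
    intro n q h
    by_cases hn : n = 0
    · exact Or.inl hn
    right
    obtain ⟨y, rfl⟩ := Submodule.Quotient.mk_surjective _ q
    have h1 : (Submodule.Quotient.mk (n • y) : Q) = 0 := by
      rw [← h]
      exact map_zsmul (Submodule.mkQ _) n y
    rw [Submodule.Quotient.mk_eq_zero] at h1
    rw [Submodule.mem_span_singleton] at h1
    obtain ⟨a, ha⟩ := h1
    haveI : IsAddTorsionFree Λ :=
      Module.isTorsionFree_int_iff_isAddTorsionFree.mp (inferInstance : Module.IsTorsionFree ℤ Λ)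
    obtain ⟨b, hb⟩ := quot_tf l hl n hn y ⟨a, ha.symm⟩
    rw [Submodule.Quotient.mk_eq_zero, Submodule.mem_span_singleton]
    exact ⟨b, hb.symm⟩
  haveI : Module.Free ℤ Q := Module.free_of_finite_type_torsion_free'
  obtain ⟨σ, hσ⟩ := Module.projective_lifting_property
    (Submodule.mkQ (Submodule.span ℤ {l})) (LinearMap.id (M := Q))
    (Submodule.Quotient.mk_surjective _)
  set p : Λ →ₗ[ℤ] Λ := LinearMap.id - σ ∘ₗ Submodule.mkQ _ with hp
  have hpmem : ∀ x, p x ∈ Submodule.span ℤ {l} := by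
    intro x
    rw [← Submodule.Quotient.mk_eq_zero]
    have : (Submodule.mkQ (Submodule.span ℤ {l})) (p x) = 0 := by
      simp only [hp, map_sub, LinearMap.sub_apply, LinearMap.id_apply, LinearMap.comp_apply]
      have := congrArg (· (Submodule.mkQ (Submodule.span ℤ {l}) x)) hσ
      simp only [LinearMap.comp_apply, LinearMap.id_apply] at this
      rw [this, sub_self]
    simpa using this
  set p' : Λ →ₗ[ℤ] Submodule.span ℤ {l} := p.codRestrict _ hpmem with hp'
  set e := LinearEquiv.toSpanNonzeroSingleton ℤ Λ l hl0 with he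
  refine ⟨e.symm.toLinearMap ∘ₗ p', ?_⟩
  have hpl : p l = l := by
    simp only [hp, LinearMap.sub_apply, LinearMap.id_apply, LinearMap.comp_apply]
    have : Submodule.mkQ (Submodule.span ℤ {l}) l = 0 := by
      simp [Submodule.Quotient.mk_eq_zero, Submodule.mem_span_singleton_self]
    rw [this, map_zero, sub_zero]
  have h1 : p' l = e 1 := by
    apply Subtype.ext
    have : (e 1 : Λ) = l := by
      simp [he, LinearEquiv.toSpanNonzeroSingleton, LinearMap.toSpanSingleton_apply]
    rw [this]
    simpa [hp'] using hpl
  simp [LinearMap.comp_apply, h1]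

open ExteriorAlgebra in
theorem exists_retraction {Λ : Type*} [AddCommGroup Λ] [Module.Free ℤ Λ] [Module.Finite ℤ Λ]
    (l : Λ) (hl : IsPrimitiveElt' l) :
    ∃ F : ExteriorAlgebra ℤ Λ →ₗ[ℤ] (Λ ⧸ Submodule.span ℤ {l}),
      ∀ y : Λ, F (ι ℤ l * ι ℤ y) = Submodule.Quotient.mk y := by
  obtain ⟨φ, hφ⟩ := exists_dual l hl
  set Q := Λ ⧸ Submodule.span ℤ {l} with hQ
  set g : Λ →ₗ[ℤ] Q := Submodule.mkQ _ with hg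
  set B : Λ [⋀^Fin 2]→ₗ[ℤ] Q :=
    { toFun := fun v => φ (v 0) • g (v 1) - φ (v 1) • g (v 0)
      map_update_add' := by
        intro dec v i x y
        fin_cases i <;>
          simp [Function.update_apply, Fin.forall_fin_two, map_add, add_smul, smul_add] <;>
          abel
      map_update_smul' := by
        intro dec v i c x
        fin_cases i <;>
          simp [Function.update_apply, map_smul, smul_smul, smul_sub, mul_comm] <;>
          abel
      map_eq_zero_of_eq' := by
        intro v i j hij hne
        have h01 : v 0 = v 1 := by
          fin_cases i <;> fin_cases j <;> simp_all
        simp [h01] } with hB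
  set f : ∀ i : ℕ, Λ [⋀^Fin i]→ₗ[ℤ] Q := fun i =>
    match i with
    | 2 => B
    | _ => 0 with hf
  refine ⟨ExteriorAlgebra.liftAlternating f, fun y => ?_⟩
  rw [ExteriorAlgebra.liftAlternating_ι_mul, ExteriorAlgebra.liftAlternating_ι]
  show (f 2).curryLeft l ![y] = _
  rw [AlternatingMap.curryLeft_apply_apply]
  show φ l • g y - φ y • g l = _
  have hgl : g l = 0 := by
    rw [hg, Submodule.mkQ_apply, Submodule.Quotient.mk_eq_zero]
    exact Submodule.mem_span_singleton_self l
  rw [hφ, hgl, one_smul, smul_zero, sub_zero]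
  rfl

/-- For a free `ℤ`-module `Λ` of finite rank, `λ` primitive and
`λ, μ` linearly independent, the integral content of `[μ]` in `Λ/ℤλ` equals
the integral content of `λ ∧ μ` in `Λ ∧ Λ`. -/
theorem integralContent_quotient_eq_integralContent_wedge
    (Λ : Type*) [AddCommGroup Λ] [Module ℤ Λ] [Module.Free ℤ Λ] [Module.Finite ℤ Λ]
    (l m : Λ) (hl : IsPrimitiveElt l) (hind : LinearIndependent ℤ ![l, m]) (r : ℤ) :
    IsIntegralContent r (Submodule.Quotient.mk (p := Submodule.span ℤ {l}) m) ↔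
    IsIntegralContent r (ExteriorAlgebra.ι ℤ l * ExteriorAlgebra.ι ℤ m) := by
  rename_i instM _ _
  have hinst : instM = AddCommGroup.toIntModule Λ := (AddCommGroup.uniqueIntModule).uniq _
  subst hinst
  have hl' : IsPrimitiveElt' l := hl
  obtain ⟨F, hF⟩ := exists_retraction l hl'
  have key : ∀ s : ℤ, (∃ y, (Submodule.Quotient.mk (p := Submodule.span ℤ {l}) m) = s • y) ↔
      (∃ w, ExteriorAlgebra.ι ℤ l * ExteriorAlgebra.ι ℤ m = s • w) := by
    intro s
    constructor
    · rintro ⟨q, hq⟩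
      obtain ⟨y, rfl⟩ := Submodule.Quotient.mk_surjective _ q
      have h0 : (Submodule.Quotient.mk (p := Submodule.span ℤ {l}) (m - s • y)) = 0 := by
        have h1 : (Submodule.Quotient.mk (p := Submodule.span ℤ {l}) (s • y)) =
            s • (Submodule.Quotient.mk (p := Submodule.span ℤ {l}) y) :=
          map_zsmul (Submodule.mkQ _) s y
        have h2 : (Submodule.Quotient.mk (p := Submodule.span ℤ {l}) (m - s • y)) =
            Submodule.Quotient.mk (p := Submodule.span ℤ {l}) m -
            Submodule.Quotient.mk (p := Submodule.span ℤ {l}) (s • y) :=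
          map_sub (Submodule.mkQ _) m (s • y)
        rw [h2, h1, hq, sub_self]
      rw [Submodule.Quotient.mk_eq_zero, Submodule.mem_span_singleton] at h0
      obtain ⟨a, ha⟩ := h0
      have hm : m = s • y + a • l := by linear_combination (norm := module) -ha
      refine ⟨ExteriorAlgebra.ι ℤ l * ExteriorAlgebra.ι ℤ y, ?_⟩
      calc ExteriorAlgebra.ι ℤ l * ExteriorAlgebra.ι ℤ m
          = ExteriorAlgebra.ι ℤ l * (s • ExteriorAlgebra.ι ℤ y)
            + ExteriorAlgebra.ι ℤ l * (a • ExteriorAlgebra.ι ℤ l) := by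
            rw [hm, map_add, map_zsmul, map_zsmul, mul_add]
        _ = s • (ExteriorAlgebra.ι ℤ l * ExteriorAlgebra.ι ℤ y)
            + a • (ExteriorAlgebra.ι ℤ l * ExteriorAlgebra.ι ℤ l) := by
            rw [mul_smul_comm, mul_smul_comm]
        _ = s • (ExteriorAlgebra.ι ℤ l * ExteriorAlgebra.ι ℤ y) := by
            rw [ExteriorAlgebra.ι_sq_zero, smul_zero, add_zero]
    · rintro ⟨w, hw⟩
      refine ⟨F w, ?_⟩
      have := congrArg F hw
      rw [hF m, map_zsmul F s w] at this
      exact this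
  constructor <;> rintro ⟨h1, h2, h3⟩
  · exact ⟨h1, (key r).mp h2, fun s hs hd => h3 s hs ((key s).mpr hd)⟩
  · exact ⟨h1, (key r).mpr h2, fun s hs hd => h3 s hs ((key s).mp hd)⟩
end

section
/- Let Λ be a free ℤ-module of finite rank, λ a primitive element of Λ, and μ ∈ Λ with λ, μ linearly independent. Then μ is primitive modulo λ (i.e., [μ] is primitive in Λ/ℤλ) if and only if λ ∧ μ is primitive in Λ ∧ Λ. -/
/-- The alternating bilinear map `(x, y) ↦ f x • g y - f y • g x`. -/
def wedgeProj {R M N : Type*} [CommRing R] [AddCommGroup M] [Module R M] [AddCommGroup N]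
    [Module R N] (f : M →ₗ[R] R) (g : M →ₗ[R] N) : M [⋀^Fin 2]→ₗ[R] N where
  toFun v := f (v 0) • g (v 1) - f (v 1) • g (v 0)
  map_update_add' := by
    intro dec v i x y
    fin_cases i <;>
      · simp only [Fin.zero_eta, Fin.mk_one, Fin.isValue, Function.update_apply]
        simp [map_add, add_smul, smul_add]
        abel
  map_update_smul' := by
    intro dec v i c x
    fin_cases i <;>
      · simp only [Fin.zero_eta, Fin.mk_one, Fin.isValue, Function.update_apply]
        simp [map_smul, smul_smul, smul_sub, mul_comm c]
  map_eq_zero_of_eq' := by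
    intro v i j hij hne
    fin_cases i <;> fin_cases j <;> simp_all [sub_eq_zero]

@[simp] lemma wedgeProj_apply {R M N : Type*} [CommRing R] [AddCommGroup M] [Module R M]
    [AddCommGroup N] [Module R N] (f : M →ₗ[R] R) (g : M →ₗ[R] N) (v : Fin 2 → M) :
    wedgeProj f g v = f (v 0) • g (v 1) - f (v 1) • g (v 0) := rfl

/-- A primitive element of a finite free `ℤ`-module admits a functional evaluating to `1`. -/
lemma exists_functional_eq_one (Λ : Type*) [AddCommGroup Λ] [Module ℤ Λ] [Module.Free ℤ Λ]
    [Module.Finite ℤ Λ] (l : Λ) (hl : IsPrimitiveElt l) : ∃ f : Λ →ₗ[ℤ] ℤ, f l = 1 := by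
  classical
  set b := Module.Free.chooseBasis ℤ Λ with hb
  set I : Ideal ℤ := Ideal.span (Set.range fun i => b.repr l i) with hI
  have hmem : ∀ i, b.repr l i ∈ I := fun i => Ideal.subset_span ⟨i, rfl⟩
  set d := Submodule.IsPrincipal.generator I with hdd
  have hdvd : ∀ i, d ∣ b.repr l i := fun i =>
    (Submodule.IsPrincipal.mem_iff_generator_dvd I).mp (hmem i)
  have hly : l = d • ∑ i, (b.repr l i / d) • b i := by
    simp only [← Int.cast_smul_eq_zsmul ℤ, Int.cast_id]
    rw [Finset.smul_sum]
    conv_lhs => rw [← b.sum_repr l]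
    refine Finset.sum_congr rfl fun i _ => ?_
    conv_lhs => rw [← Int.mul_ediv_cancel' (hdvd i)]
    exact @mul_smul ℤ Λ _ ‹Module ℤ Λ›.toDistribMulAction.toMulAction.toSemigroupAction _ _ _
  have hu : IsUnit d := hl d _ hly
  have h1 : (1 : ℤ) ∈ I := by
    rw [← Ideal.span_singleton_generator I]
    exact Ideal.mem_span_singleton.mpr (isUnit_iff_dvd_one.mp hu)
  rw [hI, Ideal.span] at h1
  obtain ⟨c, hc⟩ := Finsupp.mem_span_range_iff_exists_finsupp.mp h1
  rw [Finsupp.sum] at hc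
  refine ⟨b.constr ℤ c, ?_⟩
  rw [Module.Basis.constr_apply_fintype]
  simp only [Module.Basis.equivFun_apply, smul_eq_mul]
  rw [← Finset.sum_subset (Finset.subset_univ c.support)
    (fun i _ hi => by simp [Finsupp.notMem_support_iff.mp hi])]
  rw [← hc]
  exact Finset.sum_congr rfl fun i _ => by rw [smul_eq_mul, mul_comm]

/-- For a free `ℤ`-module `Λ` of finite rank, `λ` primitive and
`λ, μ` linearly independent: `μ` is primitive modulo `λ` iff `λ ∧ μ` is
primitive in `Λ ∧ Λ`. -/
theorem primitive_mod_iff_wedge_primitive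
    (Λ : Type*) [AddCommGroup Λ] [Module ℤ Λ] [Module.Free ℤ Λ] [Module.Finite ℤ Λ]
    (l m : Λ) (hl : IsPrimitiveElt l) (hind : LinearIndependent ℤ ![l, m]) :
    IsPrimitiveElt (Submodule.Quotient.mk (p := Submodule.span ℤ {l}) m) ↔
    IsPrimitiveElt (ExteriorAlgebra.ι ℤ l * ExteriorAlgebra.ι ℤ m) := by
  classical
  obtain ⟨f, hf⟩ := exists_functional_eq_one Λ l hl
  set p : Submodule ℤ Λ := Submodule.span ℤ {l} with hp
  letI qmod : Module ℤ (Λ ⧸ p) := Submodule.Quotient.module p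
  set B2 := wedgeProj f p.mkQ with hB2
  set F : ∀ n : ℕ, Λ [⋀^Fin n]→ₗ[ℤ] (Λ ⧸ p) := fun n => match n with
    | 2 => B2
    | _ => 0
    with hF
  have hF2 : F 2 = B2 := rfl
  set π := ExteriorAlgebra.liftAlternating F with hπdef
  have hmkl : p.mkQ l = 0 := by
    rw [Submodule.mkQ_apply, Submodule.Quotient.mk_eq_zero]
    exact Submodule.mem_span_singleton_self l
  have hπ : ∀ y : Λ, π (ExteriorAlgebra.ι ℤ l * ExteriorAlgebra.ι ℤ y)
      = Submodule.Quotient.mk y := by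
    intro y
    have h2 : ExteriorAlgebra.ι ℤ l * ExteriorAlgebra.ι ℤ y
        = ExteriorAlgebra.ιMulti ℤ 2 ![l, y] := by
      simp [ExteriorAlgebra.ιMulti_apply]
    rw [h2, hπdef, ExteriorAlgebra.liftAlternating_apply_ιMulti, hF2, hB2, wedgeProj_apply]
    simp [hf, hmkl]
    rw [@one_smul ℤ _ _ qmod.toDistribMulAction.toMulAction]
  constructor
  · -- mk m primitive → wedge primitive
    intro hm n w hw
    refine hm n (π w) ?_
    have h := congrArg π hw
    rwa [hπ m, map_zsmul] at h
  · -- wedge primitive → mk m primitive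
    intro hw n z hz
    obtain ⟨y, rfl⟩ := Submodule.Quotient.mk_surjective p z
    have h0 : p.mkQ (m - n • y) = 0 := by
      rw [map_sub, map_zsmul, Submodule.mkQ_apply, Submodule.mkQ_apply, hz, sub_self]
    have hmem : m - n • y ∈ p := by
      rwa [Submodule.mkQ_apply, Submodule.Quotient.mk_eq_zero] at h0
    obtain ⟨c, hc⟩ := Submodule.mem_span_singleton.mp hmem
    have hm' := sub_eq_iff_eq_add.mp hc.symm
    refine hw n (ExteriorAlgebra.ι ℤ l * ExteriorAlgebra.ι ℤ y) ?_
    rw [hm', map_add, LinearMap.map_smul, map_zsmul, mul_add, mul_smul_comm,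
      ExteriorAlgebra.ι_sq_zero, Algebra.smul_def, mul_zero, zero_add, mul_smul_comm]
end
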